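/- Let ρ : (0,1] → ℝ be a nonnegative measurable function such that r ↦ r³ρ(r) is integrable on (0,1) and satisfies the second-moment normalization ∫₀¹ r³ρ(r) dr = 2/π. Then for every δ > 0 and every k ∈ ℤ² \ {0}, the 2D nonlocal Fourier symbol satisfies the upper bound λ_δ(k) ≤ |k|². -/

import Mathlib

open Real MeasureTheory

/-- Euclidean norm of a nonzero integer vector `k ∈ ℤ²`. -/
noncomputable def knorm2 (k : ℤ × ℤ) : ℝ :=
  Real.sqrt ((k.1 : ℝ) ^ 2 + (k.2 : ℝ) ^ 2)

/-- The 2D Fourier symbol of the nonlocal diffusion operator: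
`λ_δ(k) = (4/δ²) ∫₀^{π/2} ∫₀¹ r ρ(r) (1 − cos(r δ |k| cos θ)) dr dθ`. -/
noncomputable def lambdaDelta2 (ρ : ℝ → ℝ) (δ κ : ℝ) : ℝ :=
  (4 / δ ^ 2) * ∫ θ in (0:ℝ)..(π / 2), ∫ r in (0:ℝ)..1,
    r * ρ r * (1 - Real.cos (r * δ * κ * Real.cos θ))

lemma one_sub_cos_le_sq_div_two (x : ℝ) : 1 - Real.cos x ≤ x ^ 2 / 2 := by
  have h1 : Real.sin (x / 2) ^ 2 ≤ (x / 2) ^ 2 := Real.sin_sq_le_sq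
  have h2 : Real.cos x = 1 - 2 * Real.sin (x / 2) ^ 2 := by
    have h := Real.cos_two_mul (x / 2)
    have hs := Real.sin_sq_add_cos_sq (x / 2)
    rw [show 2 * (x / 2) = x by ring] at h
    nlinarith
  nlinarith

theorem lambdaDelta2_upper_bound (ρ : ℝ → ℝ) (hmeas : Measurable ρ)
    (hnonneg : ∀ r ∈ Set.Ioc (0:ℝ) 1, 0 ≤ ρ r)
    (hint : IntervalIntegrable (fun r => r ^ 3 * ρ r) volume 0 1)
    (hmoment : (∫ r in (0:ℝ)..1, r ^ 3 * ρ r) = 2 / π)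
    (δ : ℝ) (hδ : 0 < δ) (k : ℤ × ℤ) (hk : k ≠ 0) :
    lambdaDelta2 ρ δ (knorm2 k) ≤ (knorm2 k) ^ 2 := by
  set κ := knorm2 k with hκ
  have hπ : (0:ℝ) < π := Real.pi_pos
  -- Step 1 : pointwise (in θ) bound for the inner integral
  have hinner : ∀ θ : ℝ,
      (∫ r in (0:ℝ)..1, r * ρ r * (1 - Real.cos (r * δ * κ * Real.cos θ)))
        ≤ δ ^ 2 * κ ^ 2 * Real.cos θ ^ 2 / π := by
    intro θ
    set c : ℝ := δ * κ * Real.cos θ with hc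
    have key : (∫ r in (0:ℝ)..1, r * ρ r * (1 - Real.cos (r * δ * κ * Real.cos θ)))
        ≤ ∫ r in (0:ℝ)..1, c ^ 2 / 2 * (r ^ 3 * ρ r) := by
      rw [intervalIntegral.integral_of_le zero_le_one,
        intervalIntegral.integral_of_le zero_le_one]
      apply integral_mono_of_nonneg
      · filter_upwards [ae_restrict_mem measurableSet_Ioc] with r hr
        have h1 := hnonneg r hr
        have h2 : Real.cos (r * δ * κ * Real.cos θ) ≤ 1 := Real.cos_le_one _
        have hr0 : (0:ℝ) ≤ r := le_of_lt hr.1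
        simp only [Pi.zero_apply]
        exact mul_nonneg (mul_nonneg hr0 h1) (by linarith)
      · exact (hint.const_mul (c ^ 2 / 2)).1
      · filter_upwards [ae_restrict_mem measurableSet_Ioc] with r hr
        have h1 := hnonneg r hr
        have hr0 : (0:ℝ) ≤ r := le_of_lt hr.1
        have hcos := one_sub_cos_le_sq_div_two (r * δ * κ * Real.cos θ)
        have hx : r * δ * κ * Real.cos θ = r * c := by rw [hc]; ring
        have hrρ : (0:ℝ) ≤ r * ρ r := mul_nonneg hr0 h1
        calc r * ρ r * (1 - Real.cos (r * δ * κ * Real.cos θ))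
            ≤ r * ρ r * ((r * c) ^ 2 / 2) := by
              rw [hx] at hcos ⊢; exact mul_le_mul_of_nonneg_left hcos hrρ
          _ = c ^ 2 / 2 * (r ^ 3 * ρ r) := by ring
    have hval : (∫ r in (0:ℝ)..1, c ^ 2 / 2 * (r ^ 3 * ρ r)) = c ^ 2 / π := by
      rw [intervalIntegral.integral_const_mul, hmoment]
      field_simp
    rw [hval] at key
    have : c ^ 2 / π = δ ^ 2 * κ ^ 2 * Real.cos θ ^ 2 / π := by rw [hc]; ring
    linarith [key, le_of_eq this]
  -- Step 2 : bound the outer integral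
  have hq : (0:ℝ) ≤ π / 2 := by positivity
  have houter : (∫ θ in (0:ℝ)..(π / 2), ∫ r in (0:ℝ)..1,
      r * ρ r * (1 - Real.cos (r * δ * κ * Real.cos θ)))
      ≤ ∫ θ in (0:ℝ)..(π / 2), δ ^ 2 * κ ^ 2 * Real.cos θ ^ 2 / π := by
    rw [intervalIntegral.integral_of_le hq, intervalIntegral.integral_of_le hq]
    apply integral_mono_of_nonneg
    · refine Filter.Eventually.of_forall fun θ => ?_
      apply intervalIntegral.integral_nonneg zero_le_one
      intro r hr
      rcases eq_or_lt_of_le hr.1 with h | h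
      · simp [← h]
      · have h1 := hnonneg r ⟨h, hr.2⟩
        have h2 : Real.cos (r * δ * κ * Real.cos θ) ≤ 1 := Real.cos_le_one _
        exact mul_nonneg (mul_nonneg h.le h1) (by linarith)
    · apply Continuous.integrableOn_Ioc
      continuity
    · exact Filter.Eventually.of_forall fun θ => hinner θ
  have hval2 : (∫ θ in (0:ℝ)..(π / 2), δ ^ 2 * κ ^ 2 * Real.cos θ ^ 2 / π)
      = δ ^ 2 * κ ^ 2 / 4 := by
    have : (∫ θ in (0:ℝ)..(π / 2), δ ^ 2 * κ ^ 2 * Real.cos θ ^ 2 / π)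
        = δ ^ 2 * κ ^ 2 / π * ∫ θ in (0:ℝ)..(π / 2), Real.cos θ ^ 2 := by
      rw [← intervalIntegral.integral_const_mul]
      congr 1; ext θ; ring
    have hcs : (∫ θ in (0:ℝ)..(π / 2), Real.cos θ ^ 2) = π / 4 := by
      rw [integral_cos_sq]
      rw [Real.cos_pi_div_two, Real.sin_pi_div_two, Real.cos_zero, Real.sin_zero]
      ring
    rw [this, hcs]
    field_simp
  rw [hval2] at houter
  have hfinal : lambdaDelta2 ρ δ κ ≤ (4 / δ ^ 2) * (δ ^ 2 * κ ^ 2 / 4) := by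
    unfold lambdaDelta2
    apply mul_le_mul_of_nonneg_left houter
    positivity
  calc lambdaDelta2 ρ δ κ ≤ (4 / δ ^ 2) * (δ ^ 2 * κ ^ 2 / 4) := hfinal
    _ = κ ^ 2 := by field_simp
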